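/- arXiv:2312.01400 — 2 statements merged into one kernel-verified Lean document; each statement's English description precedes it below -/
import Mathlib

section
/- Let m be even and let A and B be real tensors of order m and dimension n. If {A,B} is a P tensor pair, then for every nonzero x ∈ ℝ^n one has A x^{m-1} ≠ 0 and B x^{m-1} ≠ 0; in particular, neither A nor B has 0 as an H-eigenvalue or as a Z-eigenvalue. -/
open Finset

/-- A real tensor of order `m` and dimension `n`, indexed by a first index in `Fin n`
and `m - 1` further indices in `Fin n`. -/
abbrev Tensor (m n : ℕ) : Type := Fin n → (Fin (m - 1) → Fin n) → ℝ

/-- `tApp A x` is the vector `A x^{m-1}` with `i`-th component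
`∑_{i₂,…,i_m} a_{i i₂ … i_m} x_{i₂} ⋯ x_{i_m}`. -/
noncomputable def tApp {m n : ℕ} (A : Tensor m n) (x : Fin n → ℝ) : Fin n → ℝ :=
  fun i => ∑ j : Fin (m - 1) → Fin n, A i j * ∏ k, x (j k)

/-- The identity tensor: entries `1` when all indices coincide, `0` otherwise,
so that `tApp (idT m n) x = x^{[m-1]}`. -/
def idT (m n : ℕ) : Tensor m n :=
  fun i j => if (∀ k, j k = i) then 1 else 0

/-- The solution set of the horizontal tensor complementarity problem HTCP(A,B,q). -/
def SOL {m n : ℕ} (A B : Tensor m n) (q : Fin n → ℝ) :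
    Set ((Fin n → ℝ) × (Fin n → ℝ)) :=
  {p | p.1 ⊓ p.2 = 0 ∧ tApp A p.1 - tApp B p.2 = q}

/-- `{A,B}` is an R0 tensor pair. -/
def R0Pair {m n : ℕ} (A B : Tensor m n) : Prop :=
  ∀ x y : Fin n → ℝ, x ⊓ y = 0 → tApp A x - tApp B y = 0 → x = 0 ∧ y = 0

/-- `{A,B}` is a P tensor pair. -/
def PPair {m n : ℕ} (A B : Tensor m n) : Prop :=
  ∀ x y : Fin n → ℝ, x * y ≤ 0 → tApp A x - tApp B y = 0 → x = 0 ∧ y = 0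

/-- `l` is an H-eigenvalue of `A`: `A x^{m-1} = l x^{[m-1]}` for some nonzero `x`. -/
def HEigenvalue {m n : ℕ} (A : Tensor m n) (l : ℝ) : Prop :=
  ∃ x : Fin n → ℝ, x ≠ 0 ∧ tApp A x = l • fun i => x i ^ (m - 1)

/-- `l` is a Z-eigenvalue of `A`: `A x^{m-1} = l x` for some `x` with `xᵀx = 1`. -/
def ZEigenvalue {m n : ℕ} (A : Tensor m n) (l : ℝ) : Prop :=
  ∃ x : Fin n → ℝ, dotProduct x x = 1 ∧ tApp A x = l • x


lemma tApp_zero {m n : ℕ} (hm : 2 ≤ m) (A : Tensor m n) : tApp A 0 = 0 := by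
  funext i
  simp only [tApp, Pi.zero_apply]
  have hpos : 0 < m - 1 := by omega
  have : ∀ j : Fin (m - 1) → Fin n, A i j * ∏ k : Fin (m-1), (0:ℝ) = 0 := by
    intro j
    rw [Finset.prod_const, Finset.card_univ, Fintype.card_fin, zero_pow (by omega), mul_zero]
  simpa using Finset.sum_eq_zero fun j _ => this j

/-- for even `m`, a P tensor pair `{A,B}` has `A x^{m-1} ≠ 0` and
`B x^{m-1} ≠ 0` for all nonzero `x`; in particular neither tensor has `0` as an
H-eigenvalue or a Z-eigenvalue. -/
theorem pPair_no_zero_eigenvalues (m n : ℕ) (hm : 2 ≤ m) (hn : 1 ≤ n) (hme : Even m)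
    (A B : Tensor m n) (h : PPair A B) :
    (∀ x : Fin n → ℝ, x ≠ 0 → tApp A x ≠ 0 ∧ tApp B x ≠ 0) ∧
      ¬ HEigenvalue A 0 ∧ ¬ HEigenvalue B 0 ∧ ¬ ZEigenvalue A 0 ∧ ¬ ZEigenvalue B 0 := by
  have key : ∀ x : Fin n → ℝ, x ≠ 0 → tApp A x ≠ 0 ∧ tApp B x ≠ 0 := by
    intro x hx
    constructor
    · intro hA
      apply hx
      exact (h x 0 (by simp) (by rw [hA, tApp_zero hm, sub_zero])).1
    · intro hB
      apply hx
      exact (h 0 x (by simp) (by rw [hB, tApp_zero hm, sub_zero])).2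
  refine ⟨key, ?_, ?_, ?_, ?_⟩
  · rintro ⟨x, hx, hAx⟩
    exact (key x hx).1 (by simpa using hAx)
  · rintro ⟨x, hx, hBx⟩
    exact (key x hx).2 (by simpa using hBx)
  · rintro ⟨x, hx, hAx⟩
    have hx0 : x ≠ 0 := by rintro rfl; simp [dotProduct] at hx
    exact (key x hx0).1 (by simpa using hAx)
  · rintro ⟨x, hx, hBx⟩
    have hx0 : x ≠ 0 := by rintro rfl; simp [dotProduct] at hx
    exact (key x hx0).2 (by simpa using hBx)
end

section
/- Let 𝓘 be the identity tensor of order 3 and dimension 2 and let B = −𝓘. Then {𝓘, −𝓘} is a P tensor pair (i.e., x * y ≤ 0 and x^{[2]} + y^{[2]} = 0 imply (x,y) = (0,0)), but HTCP(𝓘, −𝓘, q) with q = (0, −1)ᵀ has no solution, i.e. SOL(𝓘, −𝓘, (0,−1)ᵀ) is empty. Hence for odd order m a P tensor pair need not guarantee existence of solutions of the HTCP. -/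
open Finset

lemma tApp_idT (x : Fin 2 → ℝ) (i : Fin 2) : tApp (idT 3 2) x i = x i * x i := by
  unfold tApp idT
  rw [Finset.sum_eq_single (fun _ => i)]
  · simp [Fin.prod_univ_two]; ring
  · intro b _ hb
    have h : ¬ ∀ k, b k = i := fun h => hb (funext h)
    simp [h]
  · simp

lemma tApp_neg_idT (x : Fin 2 → ℝ) (i : Fin 2) :
    tApp (-(idT 3 2)) x i = -(x i * x i) := by
  have : tApp (-(idT 3 2)) x i = -tApp (idT 3 2) x i := by
    unfold tApp
    simp [neg_mul, Finset.sum_neg_distrib]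
  rw [this, tApp_idT]

/-- `{𝓘, -𝓘}` (order 3, dimension 2) is a P tensor pair, but
HTCP(𝓘, -𝓘, (0,-1)ᵀ) has no solution. -/
theorem pPair_without_existence :
    PPair (idT 3 2) (-(idT 3 2)) ∧ SOL (idT 3 2) (-(idT 3 2)) ![0, -1] = ∅ := by
  constructor
  · intro x y _ heq
    have h : ∀ i, x i * x i + y i * y i = 0 := by
      intro i
      have := congrFun heq i
      simp [Pi.sub_apply, tApp_idT, tApp_neg_idT] at this
      linarith
    refine ⟨funext fun i => ?_, funext fun i => ?_⟩ <;>
      · show _ = (0:ℝ)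
        nlinarith [h i, mul_self_nonneg (x i), mul_self_nonneg (y i)]
  · ext ⟨x, y⟩
    simp only [SOL, Set.mem_setOf_eq, Set.mem_empty_iff_false, iff_false, not_and]
    intro _ heq
    have := congrFun heq 1
    simp [Pi.sub_apply, tApp_idT, tApp_neg_idT] at this
    nlinarith [sq_nonneg (x 1), sq_nonneg (y 1)]
end
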